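/- Let (m_k)_{k≥0} be a real sequence with m_0 = 1 and let (a_k) and (W_n) be as in the context. Then W_0 = 1 and for every n ≥ 1 the polynomial identity n·W_n(x) = Σ_{k=1}^n (n choose k)·W_{n−k}(x)·(k·x·m_{k−1} − n·m_k) holds in ℝ[x]. -/

import Mathlib

open Finset Polynomial

private lemma reindex_lem {M : Type*} [AddCommMonoid M] (n : ℕ) (F : ℕ → ℕ → M) :
    ∑ k ∈ Icc 1 n, ∑ i ∈ range (n - k + 1), F k i
      = ∑ j ∈ Icc 1 n, ∑ k ∈ Icc 1 j, F k (j - k) := by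
  rw [Finset.sum_sigma', Finset.sum_sigma']
  refine Finset.sum_nbij' (fun p => Sigma.mk (p.1 + p.2) p.1)
    (fun p => Sigma.mk p.2 (p.1 - p.2)) ?_ ?_ ?_ ?_ ?_
  · intro p hp
    simp only [mem_sigma, mem_Icc, mem_range] at hp ⊢
    omega
  · intro p hp
    simp only [mem_sigma, mem_Icc, mem_range] at hp ⊢
    omega
  · rintro ⟨x, y⟩ hp
    simp only [mem_sigma, mem_Icc, mem_range] at hp
    have h : x + y - x = y := by omega
    exact congrArg (Sigma.mk x) h
  · rintro ⟨j, k⟩ hp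
    simp only [mem_sigma, mem_Icc, mem_range] at hp
    have h : k + (j - k) = j := by omega
    exact congrFun (congrArg Sigma.mk h) k
  · rintro ⟨x, y⟩ hp
    simp only [mem_sigma, mem_Icc, mem_range] at hp
    show F x y = F x (x + y - x)
    congr 1
    omega

private lemma Icc_one_sum {M : Type*} [AddCommMonoid M] (n : ℕ) (f : ℕ → M) :
    ∑ k ∈ Icc 1 n, f k = ∑ i ∈ range n, f (i + 1) := by
  rw [← Finset.Ico_add_one_right_eq_Icc, Finset.sum_Ico_eq_sum_range]
  simp [Nat.add_comm]

theorem stmt_8 (m : ℕ → ℝ) (hm0 : m 0 = 1)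
    (a : ℕ → ℝ) (ha0 : a 0 = 1)
    (ha : ∀ n : ℕ, 1 ≤ n →
      ∑ k ∈ Finset.range (n + 1), (n.choose k : ℝ) * m k * a (n - k) = 0)
    (W : ℕ → Polynomial ℝ)
    (hW : ∀ n, W n =
      ∑ k ∈ Finset.range (n + 1),
        Polynomial.C ((n.choose k : ℝ) * a k) * Polynomial.X ^ (n - k)) :
    W 0 = 1 ∧
    ∀ n : ℕ, 1 ≤ n →
      Polynomial.C (n : ℝ) * W n =
        ∑ k ∈ Finset.Icc 1 n,
          Polynomial.C (n.choose k : ℝ) * W (n - k) *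
            (Polynomial.C ((k : ℝ) * m (k - 1)) * Polynomial.X -
              Polynomial.C ((n : ℝ) * m k)) := by
  -- inner scalar sums
  have hB : ∀ j : ℕ, 1 ≤ j →
      ∑ k ∈ Icc 1 j, (j.choose k : ℝ) * m k * a (j - k) = -a j := by
    intro j hj
    have h0 := ha j hj
    rw [Finset.sum_range_succ'] at h0
    simp only [Nat.choose_zero_right, Nat.cast_one, hm0, Nat.sub_zero, one_mul] at h0
    rw [Icc_one_sum]
    linarith
  have hA : ∀ j : ℕ, 1 ≤ j →
      ∑ k ∈ Icc 1 j, (k : ℝ) * m (k - 1) * (j.choose k : ℝ) * a (j - k)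
        = if j = 1 then 1 else 0 := by
    intro j hj
    rw [Icc_one_sum]
    have key : ∀ i : ℕ, ((i + 1 : ℕ) : ℝ) * m (i + 1 - 1) * (j.choose (i + 1) : ℝ) * a (j - (i + 1))
        = (j : ℝ) * ((j - 1).choose i * m i * a ((j - 1) - i)) := by
      intro i
      have hc : (j : ℕ) * (j - 1).choose i = j.choose (i + 1) * (i + 1) := by
        have := Nat.add_one_mul_choose_eq (j - 1) i
        rwa [Nat.sub_add_cancel hj] at this
      have hc' : (j : ℝ) * ((j - 1).choose i : ℝ) = (j.choose (i + 1) : ℝ) * ((i : ℝ) + 1) := by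
        exact_mod_cast congrArg (Nat.cast : ℕ → ℝ) hc
      have he : j - (i + 1) = (j - 1) - i := by omega
      rw [he]
      simp only [Nat.add_sub_cancel]
      push_cast
      linear_combination (-(m i * a (j - 1 - i))) * hc'
    rw [Finset.sum_congr rfl fun i _ => key i, ← Finset.mul_sum]
    rcases eq_or_lt_of_le hj with h1 | h2
    · simp [← h1, hm0, ha0]
    · have hj2 : 1 ≤ j - 1 := by omega
      have hr : j - 1 + 1 = j := by omega
      have := ha (j - 1) hj2
      rw [hr] at this
      rw [this]
      simp [if_neg (by omega : j ≠ 1)]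
  constructor
  · rw [hW]; simp [ha0]
  intro n hn
  symm
  calc
    ∑ k ∈ Finset.Icc 1 n,
        Polynomial.C (n.choose k : ℝ) * W (n - k) *
          (Polynomial.C ((k : ℝ) * m (k - 1)) * Polynomial.X -
            Polynomial.C ((n : ℝ) * m k))
      = ∑ k ∈ Icc 1 n, ∑ i ∈ range (n - k + 1),
          Polynomial.C (n.choose k : ℝ) *
            (Polynomial.C (((n - k).choose i : ℝ) * a i) * Polynomial.X ^ (n - k - i)) *
          (Polynomial.C ((k : ℝ) * m (k - 1)) * Polynomial.X -
            Polynomial.C ((n : ℝ) * m k)) := by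
        refine Finset.sum_congr rfl fun k hk => ?_
        rw [hW (n - k), Finset.mul_sum, Finset.sum_mul]
    _ = ∑ j ∈ Icc 1 n, ∑ k ∈ Icc 1 j,
          Polynomial.C (n.choose k : ℝ) *
            (Polynomial.C (((n - k).choose (j - k) : ℝ) * a (j - k)) *
              Polynomial.X ^ (n - k - (j - k))) *
          (Polynomial.C ((k : ℝ) * m (k - 1)) * Polynomial.X -
            Polynomial.C ((n : ℝ) * m k)) :=
        reindex_lem n _
    _ = ∑ j ∈ Icc 1 n,
          (Polynomial.C ((n.choose j : ℝ) *
              ∑ k ∈ Icc 1 j, (k : ℝ) * m (k - 1) * (j.choose k : ℝ) * a (j - k)) *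
            Polynomial.X ^ (n - j + 1) -
          Polynomial.C ((n.choose j : ℝ) * ((n : ℝ) *
              ∑ k ∈ Icc 1 j, (j.choose k : ℝ) * m k * a (j - k))) *
            Polynomial.X ^ (n - j)) := by
        refine Finset.sum_congr rfl fun j hj => ?_
        simp only [mem_Icc] at hj
        trans (∑ k ∈ Icc 1 j,
          (Polynomial.C ((n.choose j : ℝ) * ((k : ℝ) * m (k - 1) * (j.choose k : ℝ) * a (j - k))) *
              Polynomial.X ^ (n - j + 1) -
            Polynomial.C ((n.choose j : ℝ) * ((n : ℝ) * ((j.choose k : ℝ) * m k * a (j - k)))) *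
              Polynomial.X ^ (n - j)))
        swap
        · rw [Finset.sum_sub_distrib, ← Finset.sum_mul, ← Finset.sum_mul, ← map_sum, ← map_sum]
          simp only [← Finset.mul_sum]
        refine Finset.sum_congr rfl fun k hk => ?_
        simp only [mem_Icc] at hk
        have h1 : n - k - (j - k) = n - j := by omega
        have hc : (n.choose j : ℝ) * (j.choose k : ℝ)
            = (n.choose k : ℝ) * ((n - k).choose (j - k) : ℝ) := by
          exact_mod_cast congrArg (Nat.cast : ℕ → ℝ)
            (Nat.choose_mul (n := n) hk.2)
        rw [h1]
        simp only [Polynomial.C_mul]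
        have hx : (Polynomial.X : Polynomial ℝ) ^ (n - j + 1)
            = Polynomial.X ^ (n - j) * Polynomial.X := by rw [pow_succ]
        rw [hx]
        have hc2 : Polynomial.C (n.choose j : ℝ) * Polynomial.C (j.choose k : ℝ)
            = Polynomial.C (n.choose k : ℝ) * Polynomial.C ((n - k).choose (j - k) : ℝ) := by
          rw [← Polynomial.C_mul, ← Polynomial.C_mul, hc]
        linear_combination (Polynomial.X ^ (n - j) * Polynomial.C ((n : ℝ)) * Polynomial.C (m k) *
            Polynomial.C (a (j - k)) -
          Polynomial.X ^ (n - j) * Polynomial.X *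
            Polynomial.C (a (j - k)) * Polynomial.C ((k : ℝ)) * Polynomial.C (m (k - 1))) * hc2
    _ = ∑ j ∈ Icc 1 n,
          (Polynomial.C ((n.choose j : ℝ) * (if j = 1 then (1:ℝ) else 0)) *
            Polynomial.X ^ (n - j + 1) -
          Polynomial.C ((n.choose j : ℝ) * ((n : ℝ) * (-a j))) *
            Polynomial.X ^ (n - j)) := by
        refine Finset.sum_congr rfl fun j hj => ?_
        simp only [mem_Icc] at hj
        rw [hA j hj.1, hB j hj.1]
    _ = Polynomial.C (n : ℝ) * W n := by
        rw [Finset.sum_sub_distrib]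
        have hfirst : ∑ j ∈ Icc 1 n,
            Polynomial.C ((n.choose j : ℝ) * (if j = 1 then (1:ℝ) else 0)) *
              Polynomial.X ^ (n - j + 1)
            = Polynomial.C (n : ℝ) * Polynomial.X ^ n := by
          rw [Finset.sum_eq_single 1]
          · have : n - 1 + 1 = n := by omega
            simp [this]
          · intro b _ hb
            simp [if_neg hb]
          · intro h
            exact absurd (Finset.mem_Icc.mpr ⟨le_refl 1, hn⟩) h
        have hsecond : ∑ j ∈ Icc 1 n,
            Polynomial.C ((n.choose j : ℝ) * ((n : ℝ) * (-a j))) * Polynomial.X ^ (n - j)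
            = Polynomial.C (n : ℝ) * Polynomial.X ^ n - Polynomial.C (n : ℝ) * W n := by
          have hWn : Polynomial.C (n : ℝ) * W n
              = ∑ j ∈ range (n + 1),
                  Polynomial.C ((n.choose j : ℝ) * ((n : ℝ) * a j)) * Polynomial.X ^ (n - j) := by
            rw [hW n, Finset.mul_sum]
            refine Finset.sum_congr rfl fun j _ => ?_
            rw [← mul_assoc, ← Polynomial.C_mul, mul_left_comm ((n:ℝ)) ((n.choose j : ℝ)) (a j)]
          have hpeel : ∑ j ∈ range (n + 1),
              Polynomial.C ((n.choose j : ℝ) * ((n : ℝ) * a j)) * Polynomial.X ^ (n - j)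
              = (∑ j ∈ Icc 1 n,
                  Polynomial.C ((n.choose j : ℝ) * ((n : ℝ) * a j)) * Polynomial.X ^ (n - j))
                + Polynomial.C (n : ℝ) * Polynomial.X ^ n := by
            rw [Finset.sum_range_succ', Icc_one_sum]
            simp [ha0]
          have : ∑ j ∈ Icc 1 n,
              Polynomial.C ((n.choose j : ℝ) * ((n : ℝ) * (-a j))) * Polynomial.X ^ (n - j)
              = -∑ j ∈ Icc 1 n,
                  Polynomial.C ((n.choose j : ℝ) * ((n : ℝ) * a j)) * Polynomial.X ^ (n - j) := by
            rw [← Finset.sum_neg_distrib]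
            refine Finset.sum_congr rfl fun j _ => ?_
            simp only [mul_neg, Polynomial.C_neg, neg_mul]
          rw [this]
          have h2 := hWn.trans hpeel
          linear_combination h2
        rw [hfirst, hsecond]
        ring
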